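/- For every odd integer n ≥ 7, the tail ζ*_n(3) = Σ_{k=n}^∞ (-1)^{k+1}/k^3 satisfies 1/(2n^3-3n^2+(9/2)n-3/2) < ζ*_n(3) < 1/(2n^3-3n^2+(9/2)n-5/2), and consequently ⌊ζ*_n(3)^{-1}⌋ = 2n^3-3n^2+(9/2)n-5/2. -/

import Mathlib

open Filter Topology

noncomputable def psi (c x : ℝ) : ℝ := 1 / (2*x^3 - 3*x^2 + (9/2)*x - c)

lemma den_pos' (c x : ℝ) (hc : c ≤ 3) (hx : 7 ≤ x) :
    0 < 2*x^3 - 3*x^2 + (9/2)*x - c := by nlinarith [sq_nonneg x, sq_nonneg (x-7)]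

lemma psi_pos (c x : ℝ) (hc : c ≤ 3) (hx : 7 ≤ x) : 0 < psi c x :=
  div_pos one_pos (den_pos' c x hc hx)

lemma psi_le (c x : ℝ) (hc : c ≤ 3) (hx : 7 ≤ x) : psi c x ≤ 1 / x := by
  rw [psi, div_le_div_iff₀ (den_pos' c x hc hx) (by linarith)]
  nlinarith [sq_nonneg (x-7), sq_nonneg x]

lemma psi_anti (c : ℝ) (hc : c ≤ 3) {x y : ℝ} (hx : 7 ≤ x) (hxy : x ≤ y) :
    psi c y ≤ psi c x := by
  apply div_le_div_of_nonneg_left one_pos.le (den_pos' c x hc hx)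
  nlinarith [den_pos' c x hc hx, sq_nonneg (x+y), sq_nonneg (x-7), sq_nonneg (y-7)]

lemma keyA (x : ℝ) (hx : 7 ≤ x) :
    psi (3/2) x - psi (3/2) (x+2) < 1/x^3 - 1/(x+1)^3 := by
  unfold psi
  have h1 : (0:ℝ) < x^3 := by positivity
  have h2 : (0:ℝ) < (x+1)^3 := by positivity
  have h3 := den_pos' (3/2) x (by norm_num) hx
  have h4 := den_pos' (3/2) (x+2) (by norm_num) (by linarith)
  have hy : (0:ℝ) ≤ x - 7 := by linarith
  rw [div_sub_div _ _ h3.ne' h4.ne', div_sub_div _ _ h1.ne' h2.ne',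
    div_lt_div_iff₀ (by positivity) (by positivity)]
  nlinarith [pow_nonneg hy 2, pow_nonneg hy 3, pow_nonneg hy 4, pow_nonneg hy 5, hy]

lemma keyB (x : ℝ) (hx : 7 ≤ x) :
    1/x^3 - 1/(x+1)^3 < psi (5/2) x - psi (5/2) (x+2) := by
  unfold psi
  have h1 : (0:ℝ) < x^3 := by positivity
  have h2 : (0:ℝ) < (x+1)^3 := by positivity
  have h3 := den_pos' (5/2) x (by norm_num) hx
  have h4 := den_pos' (5/2) (x+2) (by norm_num) (by linarith)
  have hy : (0:ℝ) ≤ x - 7 := by linarith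
  rw [div_sub_div _ _ h3.ne' h4.ne', div_sub_div _ _ h1.ne' h2.ne',
    div_lt_div_iff₀ (by positivity) (by positivity)]
  nlinarith [pow_nonneg hy 2, pow_nonneg hy 3, pow_nonneg hy 4, pow_nonneg hy 5, hy]

lemma tele2 (c a : ℝ) (hc : c ≤ 3) (ha : 7 ≤ a) :
    HasSum (fun j : ℕ => psi c (a + 2*j) - psi c (a + 2*j + 2)) (psi c a) := by
  have hx : ∀ j : ℕ, (7:ℝ) ≤ a + 2*j := fun j => by
    have : (0:ℝ) ≤ (j:ℝ) := Nat.cast_nonneg j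
    linarith
  set F : ℕ → ℝ := fun j => psi c (a + 2*j) with hF
  have hstep : ∀ j : ℕ, psi c (a + 2*j + 2) = F (j+1) := by
    intro j; simp only [hF]; push_cast; ring_nf
  have hnonneg : ∀ j : ℕ, 0 ≤ F j - F (j+1) := by
    intro j
    have := psi_anti c hc (hx j) (show a + 2*j ≤ a + 2*(j+1:ℕ) by push_cast; linarith)
    simpa [hF] using sub_nonneg.mpr this
  have hpartial : ∀ N : ℕ, ∑ j ∈ Finset.range N, (F j - F (j+1)) = F 0 - F N :=
    fun N => Finset.sum_range_sub' F N
  have hFtend : Tendsto F atTop (𝓝 0) := by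
    apply squeeze_zero (fun j => (psi_pos c _ hc (hx j)).le)
      (fun j => psi_le c _ hc (hx j))
    have h1 : Tendsto (fun j : ℕ => a + 2*(j:ℝ)) atTop atTop := by
      apply tendsto_atTop_add_const_left
      exact Tendsto.const_mul_atTop two_pos tendsto_natCast_atTop_atTop
    simpa [one_div, Pi.inv_def] using h1.inv_tendsto_atTop
  have htend : Tendsto (fun N => ∑ j ∈ Finset.range N, (F j - F (j+1))) atTop (𝓝 (psi c a)) := by
    simp only [hpartial]
    have : F 0 = psi c a := by simp [hF]
    rw [← this]
    simpa using (tendsto_const_nhds.sub hFtend)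
  have hsum : HasSum (fun j => F j - F (j+1)) (psi c a) :=
    (hasSum_iff_tendsto_nat_of_nonneg hnonneg _).mpr htend
  have : (fun j : ℕ => psi c (a + 2*j) - psi c (a + 2*j + 2)) = fun j => F j - F (j+1) := by
    funext j; rw [hstep j]
  rw [this]; exact hsum

lemma summable_f (n : ℕ) (hn : 7 ≤ n) :
    Summable (fun k : ℕ => (-1 : ℝ) ^ (n + k + 1) / ((n:ℝ) + k) ^ 3) := by
  apply Summable.of_norm
  have h : Summable (fun k : ℕ => 1 / ((k + n : ℕ) : ℝ)^3) :=
    (summable_nat_add_iff (f := fun m : ℕ => 1/(m:ℝ)^3) n).mpr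
      (Real.summable_one_div_nat_pow.mpr (by norm_num))
  apply h.congr
  intro k
  have hn' : (0:ℝ) < (n:ℝ) := by exact_mod_cast Nat.lt_of_lt_of_le (by norm_num) hn
  have hk : (0:ℝ) < (n:ℝ) + k := by positivity
  rw [norm_div, norm_pow, norm_neg, norm_one, one_pow, norm_pow,
    Real.norm_eq_abs, abs_of_pos hk]
  push_cast
  ring_nf

lemma main_bounds (n : ℕ) (hn : 7 ≤ n) (hodd : Odd n) :
    psi (3/2) n < ∑' k : ℕ, (-1 : ℝ) ^ (n + k + 1) / ((n:ℝ) + k) ^ 3 ∧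
    ∑' k : ℕ, (-1 : ℝ) ^ (n + k + 1) / ((n:ℝ) + k) ^ 3 < psi (5/2) n := by
  obtain ⟨t, ht⟩ := hodd
  have hn7 : (7:ℝ) ≤ (n:ℝ) := by exact_mod_cast hn
  set f : ℕ → ℝ := fun k => (-1 : ℝ) ^ (n + k + 1) / ((n:ℝ) + k) ^ 3 with hfdef
  have hf : Summable f := summable_f n hn
  have he : Summable (fun j => f (2*j)) :=
    hf.comp_injective (fun a b h => by omega)
  have ho : Summable (fun j => f (2*j+1)) :=
    hf.comp_injective (fun a b h => by omega)
  set g : ℕ → ℝ := fun j => 1/((n:ℝ)+2*j)^3 - 1/((n:ℝ)+2*j+1)^3 with hgdef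
  have hpair : ∀ j : ℕ, f (2*j) + f (2*j+1) = g j := by
    intro j
    have e1 : (-1:ℝ)^(n + 2*j + 1) = 1 := Even.neg_one_pow ⟨t+j+1, by omega⟩
    have e2 : (-1:ℝ)^(n + (2*j+1) + 1) = -1 := Odd.neg_one_pow ⟨t+j+1, by omega⟩
    simp only [hfdef, hgdef, e1, e2]
    push_cast
    ring
  have hg : Summable g := (he.add ho).congr hpair
  have hgtsum : ∑' k, f k = ∑' j, g j := by
    rw [← tsum_even_add_odd he ho, ← Summable.tsum_add he ho]
    exact tsum_congr hpair
  have hx : ∀ j : ℕ, (7:ℝ) ≤ (n:ℝ) + 2*j := fun j => by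
    have : (0:ℝ) ≤ (j:ℝ) := Nat.cast_nonneg j
    linarith
  have hteleA := tele2 (3/2) n (by norm_num) hn7
  have hteleB := tele2 (5/2) n (by norm_num) hn7
  constructor
  · rw [hgtsum, ← hteleA.tsum_eq]
    exact Summable.tsum_lt_tsum (fun j => (keyA _ (hx j)).le) (keyA ((n:ℝ) + 2*(0:ℕ)) (hx 0))
      hteleA.summable hg
  · rw [hgtsum, ← hteleB.tsum_eq]
    exact Summable.tsum_lt_tsum (fun j => (keyB _ (hx j)).le) (keyB ((n:ℝ) + 2*(0:ℕ)) (hx 0))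
      hg hteleB.summable

theorem stmt_15 (n : ℕ) (hn : 7 ≤ n) (hodd : Odd n) :
    (1 / (2 * (n : ℝ)^3 - 3 * n^2 + (9/2) * n - 3/2) <
        ∑' k : ℕ, (-1 : ℝ) ^ (n + k + 1) / (n + k) ^ 3 ∧
      ∑' k : ℕ, (-1 : ℝ) ^ (n + k + 1) / (n + k) ^ 3 <
        1 / (2 * n^3 - 3 * n^2 + (9/2) * n - 5/2)) ∧
    (⌊(∑' k : ℕ, (-1 : ℝ) ^ (n + k + 1) / (n + k) ^ 3)⁻¹⌋ : ℝ) =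
      2 * n^3 - 3 * n^2 + (9/2) * n - 5/2 := by
  obtain ⟨hL, hU⟩ := main_bounds n hn hodd
  have hn7 : (7:ℝ) ≤ (n:ℝ) := by exact_mod_cast hn
  set S : ℝ := ∑' k : ℕ, (-1 : ℝ) ^ (n + k + 1) / ((n:ℝ) + k) ^ 3 with hSdef
  have hLpos : 0 < psi (3/2) n := psi_pos _ _ (by norm_num) hn7
  have hSpos : 0 < S := hLpos.trans hL
  have hdL : 0 < 2*(n:ℝ)^3 - 3*(n:ℝ)^2 + (9/2)*(n:ℝ) - 3/2 := den_pos' _ _ (by norm_num) hn7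
  have hdU : 0 < 2*(n:ℝ)^3 - 3*(n:ℝ)^2 + (9/2)*(n:ℝ) - 5/2 := den_pos' _ _ (by norm_num) hn7
  refine ⟨⟨by simpa [psi] using hL, by simpa [psi] using hU⟩, ?_⟩
  obtain ⟨t, ht⟩ := hodd
  set m : ℤ := 2*(n:ℤ)^3 - 3*(n:ℤ)^2 + 9*t + 2 with hmdef
  have hnt : (n:ℝ) = 2*(t:ℝ) + 1 := by exact_mod_cast congrArg (Nat.cast : ℕ → ℝ) ht
  have hm : (m:ℝ) = 2*(n:ℝ)^3 - 3*(n:ℝ)^2 + (9/2)*(n:ℝ) - 5/2 := by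
    push_cast [hmdef]
    rw [hnt]; ring
  have h1 : (m:ℝ) ≤ S⁻¹ := by
    have hU' : S < (2*(n:ℝ)^3 - 3*(n:ℝ)^2 + (9/2)*(n:ℝ) - 5/2)⁻¹ := by
      simpa [psi, one_div] using hU
    have h := one_div_lt_one_div_of_lt hSpos hU'
    simp only [one_div, inv_inv] at h
    rw [hm]
    exact h.le
  have h2 : S⁻¹ < (m:ℝ) + 1 := by
    have hL' : (2*(n:ℝ)^3 - 3*(n:ℝ)^2 + (9/2)*(n:ℝ) - 3/2)⁻¹ < S := by
      simpa [psi, one_div] using hL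
    have h := one_div_lt_one_div_of_lt (by positivity) hL'
    simp only [one_div, inv_inv] at h
    calc S⁻¹ < 2*(n:ℝ)^3 - 3*(n:ℝ)^2 + (9/2)*(n:ℝ) - 3/2 := h
      _ = (m:ℝ) + 1 := by rw [hm]; ring
  have hfloor : ⌊S⁻¹⌋ = m := Int.floor_eq_iff.mpr ⟨h1, h2⟩
  rw [hfloor, hm]
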